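/- Fix a dimension d ≥ 1 and a locality radius δ > 0. For every ε > 0 there exists R such that for all r ≥ R the following holds: if G is any simple graph whose vertex set is (ℤ/rℤ)^d and whose edges only join pairs of vertices u, v with (∑_{i=1}^d dist(u_i, v_i)²)^{1/2} ≤ δ, where dist(a,b) = min(|a−b|, r−|a−b|) is the circular distance on ℤ/rℤ, then the algebraic connectivity of G satisfies λ2(L) ≤ ε. That is, local coupling on the hypertorus also has algebraic connectivity tending to 0 as the array size grows. -/

import Mathlib

open Matrix

open Classical in
/-- The Laplacian matrix of a simple graph: `L i i` is the degree of vertex `i`,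
`L i j = -1` if `i` and `j` are adjacent, and `L i j = 0` otherwise. -/
noncomputable def lap {V : Type*} [Fintype V] (G : SimpleGraph V) : Matrix V V ℝ :=
  Matrix.of fun i j =>
    if i = j then ({k | G.Adj i k}.ncard : ℝ) else if G.Adj i j then -1 else 0

/-- The algebraic connectivity `λ₂` : the second smallest eigenvalue of the Laplacian
(for at least 2 vertices), characterized as the minimum of `xᵀ L x` over real vectors
`x` with `∑ i, x i = 0` and `‖x‖ = 1`. -/
noncomputable def lambda2 {V : Type*} [Fintype V] (A : Matrix V V ℝ) : ℝ :=
  sInf {r : ℝ | ∃ x : V → ℝ, (∑ i, x i) = 0 ∧ (∑ i, (x i) ^ 2) = 1 ∧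
    r = x ⬝ᵥ A.mulVec x}

/-- The circular distance on `ℤ/rℤ` (modelled by `Fin r`):
`dist(a,b) = min(|a − b|, r − |a − b|)`. -/
noncomputable def circDist (r : ℕ) (a b : Fin r) : ℝ :=
  min |(a : ℝ) - (b : ℝ)| ((r : ℝ) - |(a : ℝ) - (b : ℝ)|)

/-! ### Auxiliary lemmas -/

section Aux

open Real Finset

lemma circDist_nonneg' (r : ℕ) (a b : Fin r) : 0 ≤ circDist r a b := by
  have ha : (a : ℝ) < r := by exact_mod_cast a.isLt
  have hb : (b : ℝ) < r := by exact_mod_cast b.isLt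
  have ha0 : (0:ℝ) ≤ a := by positivity
  have hb0 : (0:ℝ) ≤ b := by positivity
  unfold circDist
  rw [le_min_iff]
  constructor
  · exact abs_nonneg _
  · have : |(a:ℝ) - b| ≤ r := by
      rw [abs_sub_le_iff]; constructor <;> linarith
    linarith

lemma cos_lip' (x y : ℝ) : |Real.cos x - Real.cos y| ≤ |x - y| := by
  have h1 := Real.abs_sin_le_one ((x + y) / 2)
  have h2 : |Real.sin ((x - y) / 2)| ≤ |x - y| / 2 := by
    have := Real.abs_sin_le_abs (x := (x - y) / 2)
    rwa [abs_div, abs_two] at this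
  rw [Real.cos_sub_cos, abs_mul, abs_mul]
  have h3 : |(-2 : ℝ)| = 2 := by norm_num
  rw [h3]
  nlinarith [abs_nonneg (Real.sin ((x - y) / 2)), abs_nonneg (Real.sin ((x + y) / 2))]

lemma cos_circ_aux (r : ℕ) (hr : 0 < r) (x y : ℝ) (h1 : x < r) (h2 : 0 ≤ y) (h3 : y ≤ x) :
    |Real.cos (2 * Real.pi * x / r) - Real.cos (2 * Real.pi * y / r)|
      ≤ (2 * Real.pi / r) * ((r : ℝ) - (x - y)) := by
  have hπ := Real.pi_pos
  have hr0 : (0 : ℝ) < r := by exact_mod_cast hr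
  rw [← Real.cos_sub_two_pi (2 * Real.pi * x / r)]
  calc |Real.cos (2 * Real.pi * x / r - 2 * Real.pi) - Real.cos (2 * Real.pi * y / r)|
      ≤ |(2 * Real.pi * x / r - 2 * Real.pi) - 2 * Real.pi * y / r| := cos_lip' _ _
    _ = (2 * Real.pi / r) * ((r : ℝ) - (x - y)) := by
        have he : (2 * Real.pi * x / r - 2 * Real.pi) - 2 * Real.pi * y / r
            = (2 * Real.pi / r) * ((x - y) - r) := by field_simp; ring
        rw [he, abs_of_nonpos (mul_nonpos_of_nonneg_of_nonpos (by positivity) (by linarith))]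
        ring

lemma cos_circ (r : ℕ) (hr : 0 < r) (a b : Fin r) :
    |Real.cos (2 * Real.pi * a / r) - Real.cos (2 * Real.pi * b / r)|
      ≤ (2 * Real.pi / r) * circDist r a b := by
  have hπ := Real.pi_pos
  have hr0 : (0 : ℝ) < r := by exact_mod_cast hr
  have ha : (a : ℝ) < r := by exact_mod_cast a.isLt
  have hb : (b : ℝ) < r := by exact_mod_cast b.isLt
  have ha0 : (0:ℝ) ≤ a := by positivity
  have hb0 : (0:ℝ) ≤ b := by positivity
  have key1 : |Real.cos (2 * Real.pi * a / r) - Real.cos (2 * Real.pi * b / r)|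
      ≤ (2 * Real.pi / r) * |(a : ℝ) - b| := by
    calc |Real.cos (2 * Real.pi * a / r) - Real.cos (2 * Real.pi * b / r)|
        ≤ |2 * Real.pi * a / r - 2 * Real.pi * b / r| := cos_lip' _ _
      _ = (2 * Real.pi / r) * |(a : ℝ) - b| := by
          rw [show 2 * Real.pi * (a:ℝ) / r - 2 * Real.pi * b / r
              = (2 * Real.pi / r) * ((a:ℝ) - b) by field_simp]
          rw [abs_mul, abs_of_pos (by positivity)]
  have key2 : |Real.cos (2 * Real.pi * a / r) - Real.cos (2 * Real.pi * b / r)|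
      ≤ (2 * Real.pi / r) * ((r : ℝ) - |(a : ℝ) - b|) := by
    rcases le_total (b : ℝ) (a : ℝ) with h | h
    · rw [abs_of_nonneg (by linarith : (0:ℝ) ≤ (a:ℝ) - b)]
      exact cos_circ_aux r hr _ _ ha hb0 h
    · rw [abs_of_nonpos (by linarith : (a:ℝ) - (b:ℝ) ≤ 0)]
      rw [abs_sub_comm]
      have := cos_circ_aux r hr (b:ℝ) (a:ℝ) hb ha0 h
      convert this using 2
      ring
  unfold circDist
  rcases min_cases |(a : ℝ) - b| ((r : ℝ) - |(a : ℝ) - b|) with ⟨hm, _⟩ | ⟨hm, _⟩ <;>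
    rw [hm]
  · exact key1
  · exact key2

lemma circDist_eq_mod (r : ℕ) (hr : 0 < r) (a b : Fin r) :
    circDist r a b = min (((b.val + (r - a.val)) % r : ℕ) : ℝ)
      ((r : ℝ) - (((b.val + (r - a.val)) % r : ℕ) : ℝ)) := by
  have har := a.isLt
  have hbr := b.isLt
  unfold circDist
  rcases le_or_gt a.val b.val with h | h
  · have hc : (b.val + (r - a.val)) % r = b.val - a.val := by
      have h1 : b.val + (r - a.val) = (b.val - a.val) + r := by omega
      rw [h1, Nat.add_mod_right, Nat.mod_eq_of_lt (by omega)]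
    rw [hc]
    have habs : |(a : ℝ) - b| = ((b.val - a.val : ℕ) : ℝ) := by
      rw [abs_sub_comm, abs_of_nonneg (by
        simp only [sub_nonneg]
        exact_mod_cast h)]
      push_cast [h]
      ring
    rw [habs]
  · have hc : (b.val + (r - a.val)) % r = r - (a.val - b.val) := by
      have h1 : b.val + (r - a.val) = r - (a.val - b.val) := by omega
      rw [h1, Nat.mod_eq_of_lt (by omega)]
    rw [hc]
    have habs : |(a : ℝ) - b| = ((a.val - b.val : ℕ) : ℝ) := by
      rw [abs_of_nonneg (by
        simp only [sub_nonneg]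
        exact_mod_cast h.le)]
      push_cast [h.le]
      ring
    rw [habs]
    have hcast : ((r - (a.val - b.val) : ℕ) : ℝ) = (r : ℝ) - ((a.val - b.val : ℕ) : ℝ) := by
      have hle : a.val - b.val ≤ r := by omega
      push_cast [hle]
      ring
    rw [hcast, min_comm]
    congr 1
    ring

lemma ball_card (r : ℕ) (hr : 0 < r) (a : Fin r) (δ : ℝ) :
    (Finset.univ.filter fun b : Fin r => circDist r a b ≤ δ).card ≤ 2 * (⌈δ⌉₊ + 1) := by
  classical
  set m := ⌈δ⌉₊ with hm
  set k := r - a.val with hk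
  have hmem : ∀ b ∈ Finset.univ.filter fun b : Fin r => circDist r a b ≤ δ,
      (b.val + k) % r ∈ Finset.range (m + 1) ∪ Finset.Ico (r - m) r := by
    intro b hb
    rw [Finset.mem_filter] at hb
    have hd := hb.2
    rw [circDist_eq_mod r hr a b] at hd
    set c := (b.val + k) % r with hc
    have hcr : c < r := Nat.mod_lt _ hr
    have hδm : δ ≤ (m : ℝ) := Nat.le_ceil δ
    rcases min_le_iff.mp hd with h | h
    · have : (c : ℝ) ≤ (m : ℝ) := le_trans h hδm
      have : c ≤ m := by exact_mod_cast this
      exact Finset.mem_union_left _ (Finset.mem_range.mpr (by omega))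
    · have : (r : ℝ) ≤ (c : ℝ) + (m : ℝ) := by linarith
      have hrc : r ≤ c + m := by exact_mod_cast this
      exact Finset.mem_union_right _ (Finset.mem_Ico.mpr ⟨by omega, hcr⟩)
  have hinj : Set.InjOn (fun b : Fin r => (b.val + k) % r)
      (Finset.univ.filter fun b : Fin r => circDist r a b ≤ δ) := by
    intro b _ b' _ h
    simp only at h
    have h1 : (b.val + k) % r = (b'.val + k) % r := h
    have h2 : b.val % r = b'.val % r :=
      Nat.ModEq.add_right_cancel' k (h1 : b.val + k ≡ b'.val + k [MOD r])
    rw [Nat.mod_eq_of_lt b.isLt, Nat.mod_eq_of_lt b'.isLt] at h2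
    exact Fin.ext h2
  calc (Finset.univ.filter fun b : Fin r => circDist r a b ≤ δ).card
      ≤ (Finset.range (m + 1) ∪ Finset.Ico (r - m) r).card :=
        Finset.card_le_card_of_injOn _ hmem hinj
    _ ≤ (Finset.range (m + 1)).card + (Finset.Ico (r - m) r).card := Finset.card_union_le _ _
    _ ≤ (m + 1) + m := by
        rw [Finset.card_range, Nat.card_Ico]
        omega
    _ ≤ 2 * (m + 1) := by omega

lemma exp_sum_zero (r k : ℕ) (hr : 3 ≤ r) (hk : k = 1 ∨ k = 2) :
    ∑ a ∈ Finset.range r, Complex.exp (2 * Real.pi * Complex.I * k / r) ^ a = 0 := by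
  set z : ℂ := Complex.exp (2 * Real.pi * Complex.I * k / r) with hz
  have hr0 : (r : ℂ) ≠ 0 := Nat.cast_ne_zero.mpr (by omega)
  have hzr : z ^ r = 1 := by
    rw [hz, ← Complex.exp_nat_mul]
    rw [show (r : ℂ) * (2 * Real.pi * Complex.I * k / r) = k * (2 * Real.pi * Complex.I) by
      field_simp]
    rw [Complex.exp_nat_mul, Complex.exp_two_pi_mul_I, one_pow]
  have hz1 : z ≠ 1 := by
    rw [hz, ne_eq, Complex.exp_eq_one_iff]
    rintro ⟨n, hn⟩
    rw [div_eq_iff hr0] at hn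
    have hne : (2 * Real.pi * Complex.I) ≠ 0 := by
      simp [Real.pi_ne_zero, Complex.I_ne_zero]
    have hc : (k : ℂ) = n * r := by
      have h2 : (k : ℂ) * (2 * Real.pi * Complex.I) = (n * r) * (2 * Real.pi * Complex.I) := by
        linear_combination hn
      exact mul_right_cancel₀ hne h2
    have hz2 : (k : ℤ) = n * r := by exact_mod_cast hc
    have hr3 : (3 : ℤ) ≤ (r : ℤ) := by exact_mod_cast hr
    have hk12 : (1 : ℤ) ≤ (k : ℤ) ∧ (k : ℤ) ≤ 2 := by
      rcases hk with rfl | rfl <;> norm_num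
    rcases le_or_gt n 0 with h | h
    · nlinarith [hk12.1]
    · have : (1 : ℤ) ≤ n := h
      nlinarith [hk12.2]
  rw [geom_sum_eq hz1, hzr, sub_self, zero_div]

lemma cos_sum_zero (r k : ℕ) (hr : 3 ≤ r) (hk : k = 1 ∨ k = 2) :
    ∑ a ∈ Finset.range r, Real.cos (2 * Real.pi * k * a / r) = 0 := by
  have h := exp_sum_zero r k hr hk
  have hre : ∀ a : ℕ, Real.cos (2 * Real.pi * k * a / r) =
      (Complex.exp (2 * Real.pi * Complex.I * k / r) ^ a).re := by
    intro a
    rw [← Complex.exp_nat_mul]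
    rw [show (a : ℂ) * (2 * Real.pi * Complex.I * k / r) =
      ((2 * Real.pi * k * a / r : ℝ) : ℂ) * Complex.I by push_cast; ring]
    rw [Complex.exp_ofReal_mul_I_re]
  calc ∑ a ∈ Finset.range r, Real.cos (2 * Real.pi * k * a / r)
      = ∑ a ∈ Finset.range r, (Complex.exp (2 * Real.pi * Complex.I * k / r) ^ a).re := by
        exact Finset.sum_congr rfl fun a _ => hre a
    _ = (∑ a ∈ Finset.range r, Complex.exp (2 * Real.pi * Complex.I * k / r) ^ a).re := by
        rw [Complex.re_sum]
    _ = 0 := by rw [h]; simp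

lemma cos_sq_sum (r : ℕ) (hr : 3 ≤ r) :
    ∑ a ∈ Finset.range r, Real.cos (2 * Real.pi * a / r) ^ 2 = r / 2 := by
  have h2 := cos_sum_zero r 2 hr (Or.inr rfl)
  push_cast at h2
  have hc : ∀ a ∈ Finset.range r, Real.cos (2 * Real.pi * a / r) ^ 2 =
      1 / 2 + Real.cos (2 * Real.pi * 2 * a / r) / 2 := by
    intro a _
    rw [Real.cos_sq]
    congr 2
    push_cast; ring
  rw [Finset.sum_congr rfl hc, Finset.sum_add_distrib]
  rw [show ∑ x ∈ Finset.range r, Real.cos (2 * Real.pi * 2 * x / r) / 2 = 0 by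
    rw [← Finset.sum_div, h2]; norm_num]
  simp [Finset.sum_const, Finset.card_range]
  ring

open Classical in
lemma lap_quadform {V : Type*} [Fintype V] (G : SimpleGraph V) (x : V → ℝ) :
    x ⬝ᵥ (lap G).mulVec x
      = (1/2) * ∑ i, ∑ j, (if G.Adj i j then (x i - x j)^2 else 0) := by
  classical
  set A : V → V → ℝ := fun i j => if G.Adj i j then (1:ℝ) else 0 with hA
  have hdeg : ∀ i, ({k | G.Adj i k}.ncard : ℝ) = ∑ j, A i j := by
    intro i
    rw [Set.ncard_eq_toFinset_card', Set.toFinset_setOf]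
    rw [show (∑ j, A i j) = ∑ j, (if G.Adj i j then (1:ℝ) else 0) from rfl]
    rw [Finset.sum_boole]
  have hlap : ∀ i j, lap G i j = (if i = j then ∑ k, A i k else 0) - A i j := by
    intro i j
    show (if i = j then ({k | G.Adj i k}.ncard : ℝ) else if G.Adj i j then -1 else 0) = _
    by_cases h : i = j
    · subst h
      simp [hdeg, A, G.irrefl]
    · simp only [if_neg h, hA]
      split <;> norm_num
  have hAsymm : ∀ i j, A i j = A j i := by
    intro i j
    simp only [hA]
    rw [G.adj_comm]
  have hS : ∑ i, ∑ j, A i j * x j ^ 2 = ∑ i, (∑ k, A i k) * x i ^ 2 := by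
    rw [Finset.sum_comm]
    refine Finset.sum_congr rfl fun j _ => ?_
    rw [Finset.sum_mul]
    exact Finset.sum_congr rfl fun i _ => by rw [hAsymm i j]
  have hL : x ⬝ᵥ (lap G).mulVec x
      = (∑ i, (∑ k, A i k) * x i ^ 2) - ∑ i, ∑ j, A i j * (x i * x j) := by
    calc x ⬝ᵥ (lap G).mulVec x = ∑ i, ∑ j, x i * (lap G i j * x j) := by
          simp [dotProduct, Matrix.mulVec, Finset.mul_sum]
      _ = ∑ i, ∑ j, ((if i = j then (∑ k, A i k) * (x i * x j) else 0)
            - A i j * (x i * x j)) := by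
          refine Finset.sum_congr rfl fun i _ => Finset.sum_congr rfl fun j _ => ?_
          rw [hlap]
          split <;> ring
      _ = (∑ i, (∑ k, A i k) * x i ^ 2) - ∑ i, ∑ j, A i j * (x i * x j) := by
          rw [← Finset.sum_sub_distrib]
          refine Finset.sum_congr rfl fun i _ => ?_
          rw [Finset.sum_sub_distrib]
          congr 1
          rw [Finset.sum_ite_eq]
          simp [sq]
  have hexp : ∀ i j, (if G.Adj i j then (x i - x j)^2 else 0)
      = A i j * x i ^ 2 + A i j * x j ^ 2 - 2 * (A i j * (x i * x j)) := by
    intro i j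
    simp only [hA]
    split <;> ring
  have hR : (1/2) * ∑ i, ∑ j, (if G.Adj i j then (x i - x j)^2 else 0)
      = (∑ i, (∑ k, A i k) * x i ^ 2) - ∑ i, ∑ j, A i j * (x i * x j) := by
    have h1 : ∑ i, ∑ j, (if G.Adj i j then (x i - x j)^2 else 0)
        = (∑ i, ∑ j, A i j * x i ^ 2) + (∑ i, ∑ j, A i j * x j ^ 2)
          - 2 * (∑ i, ∑ j, A i j * (x i * x j)) := by
      rw [Finset.mul_sum, ← Finset.sum_add_distrib, ← Finset.sum_sub_distrib]
      refine Finset.sum_congr rfl fun i _ => ?_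
      rw [Finset.mul_sum, ← Finset.sum_add_distrib, ← Finset.sum_sub_distrib]
      exact Finset.sum_congr rfl fun j _ => hexp i j
    have h2 : ∑ i, ∑ j, A i j * x i ^ 2 = ∑ i, (∑ k, A i k) * x i ^ 2 := by
      refine Finset.sum_congr rfl fun i _ => ?_
      rw [Finset.sum_mul]
    rw [h1, h2, hS]
    ring
  rw [hL, hR]

lemma sum_coord {d r : ℕ} (i0 : Fin d) (f : Fin r → ℝ) :
    ∑ u : Fin d → Fin r, f (u i0)
      = (Fintype.card ({j : Fin d // j ≠ i0} → Fin r) : ℝ) * ∑ a : Fin r, f a := by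
  classical
  have h := Fintype.sum_equiv (Equiv.piSplitAt i0 (fun _ => Fin r))
    (fun u : Fin d → Fin r => f (u i0))
    (fun p : Fin r × ({j : Fin d // j ≠ i0} → Fin r) => f p.1) (fun u => rfl)
  rw [h, Fintype.sum_prod_type]
  simp [Finset.sum_const, Finset.card_univ, mul_comm, Finset.sum_mul]

end Aux

/-- Local coupling on the hypertorus `(ℤ/rℤ)^d` (every edge joins vertices `u, v` with
`(∑ i, dist(u i, v i)²)^{1/2} ≤ δ` in the circular metric) has algebraic connectivity
tending to `0` as the array size grows: for fixed `d ≥ 1` and `δ > 0`, for every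
`ε > 0` there is an `R` such that for all `r ≥ R`, every such graph `G` has
`λ₂(L(G)) ≤ ε`. -/
theorem lambda2_local_torus_tendsto_zero
    (d : ℕ) (hd : 1 ≤ d) (δ : ℝ) (hδ : 0 < δ) :
    ∀ ε : ℝ, 0 < ε → ∃ R : ℕ, ∀ r : ℕ, R ≤ r →
      ∀ G : SimpleGraph (Fin d → Fin r),
        (∀ u v, G.Adj u v →
          Real.sqrt (∑ i, circDist r (u i) (v i) ^ 2) ≤ δ) →
        lambda2 (lap G) ≤ ε := by
  intro ε hε
  classical
  have hπ := Real.pi_pos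
  set m : ℕ := ⌈δ⌉₊ with hm
  set K : ℕ := 2 * (m + 1) with hK
  set C : ℝ := (K:ℝ)^d * (2*Real.pi*δ)^2 with hC
  have hC0 : 0 ≤ C := by positivity
  refine ⟨max 3 (⌈C/ε⌉₊ + 1), fun r hr G hG => ?_⟩
  have hr3 : 3 ≤ r := le_trans (le_max_left _ _) hr
  have hr0 : 0 < r := by omega
  have hr0' : (0:ℝ) < r := by exact_mod_cast hr0
  have hr1' : (1:ℝ) ≤ r := by exact_mod_cast hr0
  have hrC : C ≤ ε * r := by
    have h1 : (⌈C/ε⌉₊ + 1 : ℕ) ≤ r := le_trans (le_max_right _ _) hr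
    have h2 : C/ε ≤ (⌈C/ε⌉₊ : ℝ) := Nat.le_ceil _
    have h3 : ((⌈C/ε⌉₊ : ℕ) : ℝ) ≤ r := by exact_mod_cast (by omega : ⌈C/ε⌉₊ ≤ r)
    have h4 := le_trans h2 h3
    calc C = (C/ε) * ε := by field_simp
      _ ≤ (r:ℝ) * ε := by nlinarith
      _ = ε * r := mul_comm _ _
  set i0 : Fin d := ⟨0, hd⟩ with hi0
  set y : (Fin d → Fin r) → ℝ := fun u => Real.cos (2 * Real.pi * (u i0) / r) with hy
  set M : ℕ := Fintype.card ({j : Fin d // j ≠ i0} → Fin r) with hM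
  have hM0 : 0 < M := by
    rw [hM]
    apply Fintype.card_pos_iff.mpr
    exact ⟨fun _ => ⟨0, hr0⟩⟩
  have hM0' : (0:ℝ) < M := by exact_mod_cast hM0
  have hcard : (Fintype.card (Fin d → Fin r) : ℝ) = r * M := by
    rw [show Fintype.card (Fin d → Fin r)
        = Fintype.card (Fin r × ({j : Fin d // j ≠ i0} → Fin r)) from
      Fintype.card_congr (Equiv.piSplitAt i0 (fun _ => Fin r))]
    rw [Fintype.card_prod, Fintype.card_fin]
    push_cast
    ring
  -- sum of y is zero
  have hy0 : ∑ u, y u = 0 := by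
    simp only [hy]
    rw [sum_coord i0 (fun a : Fin r => Real.cos (2 * Real.pi * a / r))]
    have h1 : ∑ a ∈ Finset.range r, Real.cos (2 * Real.pi * a / r) = 0 := by
      have h := cos_sum_zero r 1 hr3 (Or.inl rfl)
      rw [← h]
      refine Finset.sum_congr rfl fun a _ => ?_
      push_cast
      ring_nf
    rw [show (∑ a : Fin r, Real.cos (2*Real.pi*a/r))
        = ∑ a ∈ Finset.range r, Real.cos (2*Real.pi*(a:ℕ)/r) from
      Fin.sum_univ_eq_sum_range (fun n : ℕ => Real.cos (2*Real.pi*n/r)) r]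
    rw [h1, mul_zero]
  -- sum of y² is N
  set N : ℝ := (M:ℝ) * ((r:ℝ)/2) with hNdef
  have hN0 : 0 < N := by positivity
  have hN : ∑ u, (y u)^2 = N := by
    simp only [hy]
    rw [sum_coord i0 (fun a : Fin r => Real.cos (2 * Real.pi * a / r) ^ 2)]
    rw [show (∑ a : Fin r, Real.cos (2*Real.pi*a/r)^2)
        = ∑ a ∈ Finset.range r, Real.cos (2*Real.pi*(a:ℕ)/r)^2 from
      Fin.sum_univ_eq_sum_range (fun n : ℕ => Real.cos (2*Real.pi*n/r)^2) r]
    rw [cos_sq_sum r hr3]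
  set c : ℝ := 1 / Real.sqrt N with hcdef
  have hc2 : c^2 = 1/N := by
    rw [hcdef, div_pow, one_pow, Real.sq_sqrt hN0.le]
  set x : (Fin d → Fin r) → ℝ := fun u => c * y u with hx
  have hx0 : ∑ u, x u = 0 := by
    simp only [hx]
    rw [← Finset.mul_sum, hy0, mul_zero]
  have hx1 : ∑ u, (x u)^2 = 1 := by
    simp only [hx, mul_pow]
    rw [← Finset.mul_sum, hN, hc2]
    field_simp
  -- per-coordinate distance bound
  have hcoord : ∀ u v, G.Adj u v → ∀ i, circDist r (u i) (v i) ≤ δ := by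
    intro u v huv i
    have h2 := hG u v huv
    have h3 : circDist r (u i) (v i) ≤ Real.sqrt (∑ i, circDist r (u i) (v i) ^ 2) := by
      rw [show circDist r (u i) (v i)
          = Real.sqrt (circDist r (u i) (v i)^2) from
        (Real.sqrt_sq (circDist_nonneg' _ _ _)).symm]
      apply Real.sqrt_le_sqrt
      exact Finset.single_le_sum (f := fun j => circDist r (u j) (v j)^2)
        (fun j _ => sq_nonneg _) (Finset.mem_univ i)
    linarith
  -- edge bound
  set B : ℝ := c^2 * ((2*Real.pi/r)*δ)^2 with hB
  have hB0 : 0 ≤ B := by positivity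
  have hedge : ∀ u v, G.Adj u v → (x u - x v)^2 ≤ B := by
    intro u v huv
    have h4 : |y u - y v| ≤ (2*Real.pi/r) * δ := by
      calc |y u - y v| ≤ (2*Real.pi/r) * circDist r (u i0) (v i0) := cos_circ r hr0 _ _
        _ ≤ (2*Real.pi/r) * δ :=
            mul_le_mul_of_nonneg_left (hcoord u v huv i0) (by positivity)
    have h5 : (y u - y v)^2 ≤ ((2*Real.pi/r)*δ)^2 := by
      calc (y u - y v)^2 = |y u - y v|^2 := (sq_abs _).symm
        _ ≤ ((2*Real.pi/r)*δ)^2 := by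
            apply pow_le_pow_left₀ (abs_nonneg _) h4
    calc (x u - x v)^2 = c^2 * (y u - y v)^2 := by simp only [hx]; ring
      _ ≤ c^2 * ((2*Real.pi/r)*δ)^2 :=
          mul_le_mul_of_nonneg_left h5 (sq_nonneg c)
      _ = B := hB.symm
  -- degree bound
  have hdeg : ∀ u, (Finset.univ.filter (G.Adj u)).card ≤ K^d := by
    intro u
    have hsub : Finset.univ.filter (G.Adj u)
        ⊆ Fintype.piFinset (fun i => Finset.univ.filter
            fun b => circDist r (u i) b ≤ δ) := by
      intro v hv
      rw [Finset.mem_filter] at hv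
      rw [Fintype.mem_piFinset]
      intro i
      rw [Finset.mem_filter]
      exact ⟨Finset.mem_univ _, hcoord u v hv.2 i⟩
    calc (Finset.univ.filter (G.Adj u)).card
        ≤ (Fintype.piFinset (fun i => Finset.univ.filter
            fun b => circDist r (u i) b ≤ δ)).card := Finset.card_le_card hsub
      _ = ∏ i : Fin d, (Finset.univ.filter
            fun b => circDist r (u i) b ≤ δ).card := Fintype.card_piFinset _
      _ ≤ ∏ _i : Fin d, K := Finset.prod_le_prod' (fun i _ => ball_card r hr0 (u i) δ)
      _ = K^d := by rw [Finset.prod_const, Finset.card_univ, Fintype.card_fin]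
  -- quadratic form bound
  have hQ : x ⬝ᵥ (lap G).mulVec x
      ≤ (1/2) * ((Fintype.card (Fin d → Fin r) : ℝ) * ((K:ℝ)^d * B)) := by
    rw [lap_quadform]
    refine mul_le_mul_of_nonneg_left ?_ (by norm_num)
    calc ∑ u, ∑ v, (if G.Adj u v then (x u - x v)^2 else 0)
        ≤ ∑ _u : Fin d → Fin r, (K:ℝ)^d * B := by
          apply Finset.sum_le_sum
          intro u _
          calc ∑ v, (if G.Adj u v then (x u - x v)^2 else 0)
              ≤ ∑ v, (if G.Adj u v then B else 0) := by
                apply Finset.sum_le_sum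
                intro v _
                split
                · exact hedge u v (by assumption)
                · exact le_refl 0
            _ = ((Finset.univ.filter (G.Adj u)).card : ℝ) * B := by
                rw [← Finset.sum_filter, Finset.sum_const, nsmul_eq_mul]
            _ ≤ (K:ℝ)^d * B := by
                apply mul_le_mul_of_nonneg_right _ hB0
                calc ((Finset.univ.filter (G.Adj u)).card : ℝ)
                    ≤ ((K^d : ℕ) : ℝ) := by exact_mod_cast hdeg u
                  _ = (K:ℝ)^d := by push_cast; ring
        _ = (Fintype.card (Fin d → Fin r) : ℝ) * ((K:ℝ)^d * B) := by
          rw [Finset.sum_const, Finset.card_univ, nsmul_eq_mul]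
  have hQ2 : (1/2) * ((Fintype.card (Fin d → Fin r) : ℝ) * ((K:ℝ)^d * B)) = C / r^2 := by
    rw [hcard, hB, hc2, hNdef, hC]
    field_simp
  -- conclude
  have hfin : x ⬝ᵥ (lap G).mulVec x ≤ ε := by
    rw [hQ2] at hQ
    have h6 : C / r^2 ≤ C / r :=
      div_le_div_of_nonneg_left hC0 hr0' (by nlinarith)
    have h7 : C / r ≤ ε := (div_le_iff₀ hr0').mpr (by linarith)
    linarith
  have hbdd : BddBelow {s : ℝ | ∃ z : (Fin d → Fin r) → ℝ, (∑ i, z i) = 0 ∧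
      (∑ i, (z i) ^ 2) = 1 ∧ s = z ⬝ᵥ (lap G).mulVec z} := by
    refine ⟨0, fun s hs => ?_⟩
    obtain ⟨z, _, _, rfl⟩ := hs
    rw [lap_quadform]
    apply mul_nonneg (by norm_num)
    apply Finset.sum_nonneg
    intro u _
    apply Finset.sum_nonneg
    intro v _
    split
    · exact sq_nonneg _
    · exact le_refl 0
  have hmem : (x ⬝ᵥ (lap G).mulVec x) ∈ {s : ℝ | ∃ z : (Fin d → Fin r) → ℝ,
      (∑ i, z i) = 0 ∧ (∑ i, (z i) ^ 2) = 1 ∧ s = z ⬝ᵥ (lap G).mulVec z} :=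
    ⟨x, hx0, hx1, rfl⟩
  calc lambda2 (lap G) ≤ x ⬝ᵥ (lap G).mulVec x := csInf_le hbdd hmem
    _ ≤ ε := hfin
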